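/- Let C = Diag(d) be a diagonal positive-definite matrix with d₁ ≥ d₂ ≥ ⋯ ≥ dₙ > 0 and let 0 < s < n. Then with γ̂ := 1/d_s², the 0/1 vector x̂ with x̂ᵢ = 1 for 1 ≤ i ≤ s and x̂ᵢ = 0 for s+1 ≤ i ≤ n is an optimal solution of the scaled linx problem with γ = γ̂, and consequently γ̂ is an optimal scaling parameter: linx(C,s;γ̂) ≤ linx(C,s;γ) for every γ > 0. -/

import Mathlib

open Matrix Real Set

noncomputable section

/-- The feasible polytope `P(n,s)`. -/
def PP (n s : ℕ) : Set (Fin n → ℝ) :=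
  {x | (∑ i, x i) = (s : ℝ) ∧ ∀ i, 0 ≤ x i ∧ x i ≤ 1}

/-- The scaled linx objective `f(C,s;γ;x)`. -/
def fLinxScaled {n : ℕ} (C : Matrix (Fin n) (Fin n) ℝ) (s : ℕ) (γ : ℝ) (x : Fin n → ℝ) : ℝ :=
  (1 / 2) * (Real.log ((γ • (C * Matrix.diagonal x * C) + Matrix.diagonal fun i => 1 - x i).det)
    - (s : ℝ) * Real.log γ)

/-- The scaled linx bound `linx(C,s;γ)`. -/
def linxScaled (n s : ℕ) (C : Matrix (Fin n) (Fin n) ℝ) (γ : ℝ) : ℝ :=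
  sSup (fLinxScaled C s γ '' PP n s)

lemma term_pos' {γ d x : ℝ} (hγ : 0 < γ) (hd : 0 < d) (h0 : 0 ≤ x) (h1 : x ≤ 1) :
    0 < γ * (d * x * d) + (1 - x) := by
  nlinarith [mul_pos hγ (mul_pos hd hd),
    mul_nonneg (mul_pos hγ (mul_pos hd hd)).le h0,
    mul_nonneg (mul_pos hγ (mul_pos hd hd)).le (sub_nonneg.2 h1)]

lemma fLinx_diag_eq {n : ℕ} (d : Fin n → ℝ) (s : ℕ) (γ : ℝ) (x : Fin n → ℝ)
    (h : ∀ i, γ * (d i * x i * d i) + (1 - x i) ≠ 0) :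
    fLinxScaled (Matrix.diagonal d) s γ x
      = (1 / 2) * ((∑ i, Real.log (γ * (d i * x i * d i) + (1 - x i))) - s * Real.log γ) := by
  unfold fLinxScaled
  have hm : (γ • (Matrix.diagonal d * Matrix.diagonal x * Matrix.diagonal d)
      + Matrix.diagonal fun i => 1 - x i)
      = Matrix.diagonal (fun i => γ * (d i * x i * d i) + (1 - x i)) := by
    rw [Matrix.diagonal_mul_diagonal, Matrix.diagonal_mul_diagonal, ← Matrix.diagonal_smul,
      ← Matrix.diagonal_add]
    rfl
  rw [hm, Matrix.det_diagonal, Real.log_prod (fun i _ => h i)]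

lemma card_filter_lt (n s : ℕ) (hsn : s < n) :
    (Finset.univ.filter (fun i : Fin n => (i : ℕ) < s)).card = s := by
  have : (Finset.univ.filter (fun i : Fin n => (i : ℕ) < s)) = Finset.Iio ⟨s, hsn⟩ := by
    ext i; simp [Fin.lt_def]
  rw [this, Fin.card_Iio]

open scoped Classical in
theorem stmt_11 (n s : ℕ) (hs : 0 < s) (hsn : s < n)
    (d : Fin n → ℝ) (hmono : Antitone d) (hpos : ∀ i, 0 < d i)
    -- `iS` is the (1-based) index `s`
    (iS : Fin n) (hiS : (iS : ℕ) = s - 1)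
    (γ0 : ℝ) (hγ0 : γ0 = 1 / d iS ^ 2)
    (xh : Fin n → ℝ) (hxh : xh = fun i : Fin n => if (i : ℕ) < s then (1 : ℝ) else 0) :
    xh ∈ PP n s ∧
    (∀ x ∈ PP n s,
      fLinxScaled (Matrix.diagonal d) s γ0 x ≤ fLinxScaled (Matrix.diagonal d) s γ0 xh) ∧
    (∀ γ : ℝ, 0 < γ →
      linxScaled n s (Matrix.diagonal d) γ0 ≤ linxScaled n s (Matrix.diagonal d) γ) := by
  have hdiS : 0 < d iS := hpos iS
  have hγ0pos : 0 < γ0 := by rw [hγ0]; positivity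
  have hγd : γ0 * (d iS * d iS) = 1 := by
    rw [hγ0]; field_simp
  have hc := card_filter_lt n s hsn
  -- xh ∈ PP
  have hxhb : ∀ i, 0 ≤ xh i ∧ xh i ≤ 1 := by
    intro i; rw [hxh]; dsimp only; split_ifs <;> norm_num
  have hxhPP : xh ∈ PP n s := by
    constructor
    · rw [hxh]
      rw [Finset.sum_ite, Finset.sum_const, Finset.sum_const_zero, hc]
      simp
    · exact hxhb
  -- positivity of terms
  have hterm : ∀ (γ : ℝ), 0 < γ → ∀ (x : Fin n → ℝ), (∀ i, 0 ≤ x i ∧ x i ≤ 1) →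
      ∀ i, 0 < γ * (d i * x i * d i) + (1 - x i) := by
    intro γ hγ x hxb i
    exact term_pos' hγ (hpos i) (hxb i).1 (hxb i).2
  -- optimality of xh for γ0
  have hopt : ∀ x ∈ PP n s,
      fLinxScaled (Matrix.diagonal d) s γ0 x ≤ fLinxScaled (Matrix.diagonal d) s γ0 xh := by
    intro x hx
    obtain ⟨hxsum, hxb⟩ := hx
    have htx := hterm γ0 hγ0pos x hxb
    have hth := hterm γ0 hγ0pos xh hxhb
    rw [fLinx_diag_eq d s γ0 x (fun i => (htx i).ne'),
      fLinx_diag_eq d s γ0 xh (fun i => (hth i).ne')]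
    have key : (∑ i, Real.log (γ0 * (d i * x i * d i) + (1 - x i)))
        ≤ ∑ i, Real.log (γ0 * (d i * xh i * d i) + (1 - xh i)) := by
      apply Finset.sum_le_sum
      intro i _
      apply Real.log_le_log (htx i)
      by_cases hi : (i : ℕ) < s
      · have hile : i ≤ iS := by rw [Fin.le_def, hiS]; omega
        have hdi : d iS ≤ d i := hmono hile
        have hdd : d iS * d iS ≤ d i * d i :=
          mul_le_mul hdi hdi hdiS.le (hdiS.le.trans hdi)
        have h1 : (1 : ℝ) ≤ γ0 * (d i * d i) := by
          calc (1:ℝ) = γ0 * (d iS * d iS) := hγd.symm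
          _ ≤ γ0 * (d i * d i) := by
              exact mul_le_mul_of_nonneg_left hdd hγ0pos.le
        have hxh1 : xh i = 1 := by rw [hxh]; simp [hi]
        rw [hxh1]
        nlinarith [mul_nonneg (sub_nonneg.2 h1) (sub_nonneg.2 (hxb i).2)]
      · have hile : iS ≤ i := by rw [Fin.le_def, hiS]; omega
        have hdi : d i ≤ d iS := hmono hile
        have hdd : d i * d i ≤ d iS * d iS :=
          mul_le_mul hdi hdi (hpos i).le hdiS.le
        have h1 : γ0 * (d i * d i) ≤ 1 := by
          calc γ0 * (d i * d i) ≤ γ0 * (d iS * d iS) :=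
              mul_le_mul_of_nonneg_left hdd hγ0pos.le
          _ = 1 := hγd
        have hxh0 : xh i = 0 := by rw [hxh]; simp [hi]
        rw [hxh0]
        nlinarith [mul_nonneg (sub_nonneg.2 h1) (hxb i).1]
    linarith
  refine ⟨hxhPP, hopt, ?_⟩
  -- value at xh is independent of γ
  have hfxh : ∀ γ : ℝ, 0 < γ → fLinxScaled (Matrix.diagonal d) s γ xh
      = (1 / 2) * (∑ i : Fin n, if (i : ℕ) < s then Real.log (d i * d i) else 0) := by
    intro γ hγ
    have hth := hterm γ hγ xh hxhb
    rw [fLinx_diag_eq d s γ xh (fun i => (hth i).ne')]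
    have hlog : ∀ i : Fin n, Real.log (γ * (d i * xh i * d i) + (1 - xh i))
        = (if (i : ℕ) < s then Real.log γ + Real.log (d i * d i) else 0) := by
      intro i
      by_cases hi : (i : ℕ) < s
      · have hxh1 : xh i = 1 := by rw [hxh]; simp [hi]
        rw [hxh1, if_pos hi]
        have : γ * (d i * 1 * d i) + (1 - 1) = γ * (d i * d i) := by ring
        rw [this, Real.log_mul hγ.ne' (mul_pos (hpos i) (hpos i)).ne']
      · have hxh0 : xh i = 0 := by rw [hxh]; simp [hi]
        rw [hxh0, if_neg hi]
        have : γ * (d i * 0 * d i) + (1 - 0) = 1 := by ring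
        rw [this, Real.log_one]
    rw [Finset.sum_congr rfl (fun i _ => hlog i)]
    have hsplit : (∑ i : Fin n, if (i : ℕ) < s then Real.log γ + Real.log (d i * d i) else 0)
        = (∑ i : Fin n, if (i : ℕ) < s then Real.log γ else 0)
          + ∑ i : Fin n, if (i : ℕ) < s then Real.log (d i * d i) else 0 := by
      rw [← Finset.sum_add_distrib]
      apply Finset.sum_congr rfl
      intro i _
      split_ifs <;> ring
    have hconst : (∑ i : Fin n, if (i : ℕ) < s then Real.log γ else 0)
        = s * Real.log γ := by
      rw [Finset.sum_ite, Finset.sum_const, Finset.sum_const_zero, hc]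
      simp [mul_comm]
    rw [hsplit, hconst]
    ring
  intro γ hγ
  have hne : (fLinxScaled (Matrix.diagonal d) s γ0 '' PP n s).Nonempty :=
    ⟨_, Set.mem_image_of_mem _ hxhPP⟩
  have hbdd : BddAbove (fLinxScaled (Matrix.diagonal d) s γ '' PP n s) := by
    refine ⟨(1 / 2) * ((∑ i, Real.log (γ * (d i * d i) + 1)) - s * Real.log γ), ?_⟩
    rintro y ⟨x, hx, rfl⟩
    obtain ⟨hxsum, hxb⟩ := hx
    have htx := hterm γ hγ x hxb
    rw [fLinx_diag_eq d s γ x (fun i => (htx i).ne')]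
    have : (∑ i, Real.log (γ * (d i * x i * d i) + (1 - x i)))
        ≤ ∑ i, Real.log (γ * (d i * d i) + 1) := by
      apply Finset.sum_le_sum
      intro i _
      apply Real.log_le_log (htx i)
      nlinarith [mul_nonneg (mul_pos hγ (mul_pos (hpos i) (hpos i))).le
        (sub_nonneg.2 (hxb i).2), (hxb i).1]
    linarith
  calc linxScaled n s (Matrix.diagonal d) γ0
      ≤ fLinxScaled (Matrix.diagonal d) s γ0 xh := by
        apply csSup_le hne
        rintro y ⟨x, hx, rfl⟩
        exact hopt x hx
    _ = fLinxScaled (Matrix.diagonal d) s γ xh := by rw [hfxh γ0 hγ0pos, hfxh γ hγ]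
    _ ≤ linxScaled n s (Matrix.diagonal d) γ :=
        le_csSup hbdd (Set.mem_image_of_mem _ hxhPP)
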